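/- Let n ≥ 2, k ≥ 1, R ∈ (-1,1), and let ψ be a solution on (r₀,1) of ψ'(r) = -(1/(k(1-r²)))(ψ(r)²+1)(√(1-r²)ψ(r)² - (n-1)(r-R)ψ(r) + √(1-r²)) with r₀ ∈ (b,1) and η₁(r₀) < ψ(r₀) < η₂(r₀), where b is the larger root of B(r) = ((n-1)²+4)r² - 2(n-1)²Rr + (n-1)²R² - 4. Then ψ(r) → +∞ as r ↑ 1; in particular ψ is not bounded above on (r₀,1). -/

import Mathlib

noncomputable def Bq (n : ℕ) (R r : ℝ) : ℝ :=
  (((n : ℝ) - 1) ^ 2 + 4) * r ^ 2 - 2 * ((n : ℝ) - 1) ^ 2 * R * r + ((n : ℝ) - 1) ^ 2 * R ^ 2 - 4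

noncomputable def rootA (n : ℕ) (R : ℝ) : ℝ :=
  (((n : ℝ) - 1) ^ 2 * R - 2 * Real.sqrt (((n : ℝ) - 1) ^ 2 * (1 - R ^ 2) + 4)) / (((n : ℝ) - 1) ^ 2 + 4)

noncomputable def rootB (n : ℕ) (R : ℝ) : ℝ :=
  (((n : ℝ) - 1) ^ 2 * R + 2 * Real.sqrt (((n : ℝ) - 1) ^ 2 * (1 - R ^ 2) + 4)) / (((n : ℝ) - 1) ^ 2 + 4)

noncomputable def Aq (n : ℕ) (R x r : ℝ) : ℝ :=
  Real.sqrt (1 - r ^ 2) * x ^ 2 - ((n : ℝ) - 1) * (r - R) * x + Real.sqrt (1 - r ^ 2)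

noncomputable def eta1 (n : ℕ) (R r : ℝ) : ℝ :=
  (((n : ℝ) - 1) * (r - R) - Real.sqrt (Bq n R r)) / (2 * Real.sqrt (1 - r ^ 2))

noncomputable def eta2 (n : ℕ) (R r : ℝ) : ℝ :=
  (((n : ℝ) - 1) * (r - R) + Real.sqrt (Bq n R r)) / (2 * Real.sqrt (1 - r ^ 2))

noncomputable def Phi (n k : ℕ) (R r p : ℝ) : ℝ :=
  -(1 / ((k : ℝ) * (1 - r ^ 2))) * (p ^ 2 + 1) *
    (Real.sqrt (1 - r ^ 2) * p ^ 2 - ((n : ℝ) - 1) * (r - R) * p + Real.sqrt (1 - r ^ 2))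

lemma aux_hn1 {n : ℕ} (hn : 2 ≤ n) : (1:ℝ) ≤ (n:ℝ) - 1 := by
  have : (2:ℝ) ≤ n := by exact_mod_cast hn
  linarith

lemma aux_sqrtD_gt {n : ℕ} {R : ℝ} (hn : 2 ≤ n) (hR1 : -1 < R) (hR2 : R < 1) :
    2 < Real.sqrt (((n:ℝ)-1)^2 * (1 - R^2) + 4) := by
  have h := aux_hn1 hn
  have hD : (4:ℝ) < ((n:ℝ)-1)^2 * (1 - R^2) + 4 := by
    have h1 : (0:ℝ) < ((n:ℝ)-1)^2 := by nlinarith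
    have h2 : (0:ℝ) < 1 - R^2 := by nlinarith
    nlinarith [mul_pos h1 h2]
  have h2 : (2:ℝ) = Real.sqrt 4 := by
    rw [show (4:ℝ) = 2^2 by norm_num, Real.sqrt_sq]; norm_num
  rw [h2]
  exact Real.sqrt_lt_sqrt (by norm_num) hD

lemma aux_rootB_gt_R {n : ℕ} {R : ℝ} (hn : 2 ≤ n) (hR1 : -1 < R) (hR2 : R < 1) :
    R < rootB n R := by
  have h := aux_hn1 hn
  have hs := aux_sqrtD_gt hn hR1 hR2
  have ha : (0:ℝ) < ((n:ℝ)-1)^2 + 4 := by nlinarith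
  rw [rootB, lt_div_iff₀ ha]
  nlinarith

lemma aux_Bq_factor {n : ℕ} {R : ℝ} (hn : 2 ≤ n) (hR1 : -1 < R) (hR2 : R < 1) (r : ℝ) :
    Bq n R r = (((n:ℝ)-1)^2 + 4) * (r - rootA n R) * (r - rootB n R) := by
  have h := aux_hn1 hn
  have hD : (0:ℝ) ≤ ((n:ℝ)-1)^2 * (1 - R^2) + 4 := by
    have h1 : (0:ℝ) ≤ ((n:ℝ)-1)^2 := sq_nonneg _
    have h2 : (0:ℝ) < 1 - R^2 := by nlinarith
    nlinarith [mul_nonneg h1 (le_of_lt h2)]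
  have hs := Real.sq_sqrt hD
  have ha : ((n:ℝ)-1)^2 + 4 ≠ 0 := by nlinarith
  rw [Bq, rootA, rootB]
  have ha' : (0:ℝ) < ((n:ℝ)-1)^2 + 4 := by positivity
  field_simp
  linear_combination 4 * hs

lemma aux_Bq_pos {n : ℕ} {R r : ℝ} (hn : 2 ≤ n) (hR1 : -1 < R) (hR2 : R < 1)
    (hr : rootB n R < r) : 0 < Bq n R r := by
  have h := aux_hn1 hn
  have hs := aux_sqrtD_gt hn hR1 hR2
  have ha : (0:ℝ) < ((n:ℝ)-1)^2 + 4 := by nlinarith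
  have hAB : rootA n R < rootB n R := by
    rw [rootA, rootB, div_lt_div_iff₀ ha ha]; nlinarith
  rw [aux_Bq_factor hn hR1 hR2 r]
  have : rootA n R < r := lt_trans hAB hr
  exact mul_pos (mul_pos ha (by linarith)) (by linarith)

lemma aux_sqrtBq_lt {n : ℕ} {R r : ℝ} (hn : 2 ≤ n) (hR1 : -1 < R) (hR2 : R < 1)
    (hr : rootB n R < r) (hr1 : r < 1) :
    Real.sqrt (Bq n R r) < ((n:ℝ)-1) * (r - R) := by
  have h := aux_hn1 hn
  have hrR : R < r := lt_trans (aux_rootB_gt_R hn hR1 hR2) hr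
  have hpos : 0 < ((n:ℝ)-1) * (r - R) := by nlinarith
  rw [Real.sqrt_lt' hpos]
  rw [Bq]; nlinarith

lemma aux_one_sub_sq_pos {n : ℕ} {R r : ℝ} (hn : 2 ≤ n) (hR1 : -1 < R) (hR2 : R < 1)
    (hr : rootB n R < r) (hr1 : r < 1) : 0 < 1 - r^2 := by
  have hrR : R < r := lt_trans (aux_rootB_gt_R hn hR1 hR2) hr
  nlinarith

lemma aux_eta1_pos {n : ℕ} {R r : ℝ} (hn : 2 ≤ n) (hR1 : -1 < R) (hR2 : R < 1)
    (hr : rootB n R < r) (hr1 : r < 1) : 0 < eta1 n R r := by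
  have h2 := aux_sqrtBq_lt hn hR1 hR2 hr hr1
  have h3 := aux_one_sub_sq_pos hn hR1 hR2 hr hr1
  have h4 : 0 < Real.sqrt (1 - r^2) := Real.sqrt_pos.2 h3
  rw [eta1]
  apply div_pos (by linarith) (by linarith)

lemma aux_Aq_factor {n : ℕ} {R r : ℝ} (hn : 2 ≤ n) (hR1 : -1 < R) (hR2 : R < 1)
    (hr : rootB n R < r) (hr1 : r < 1) (x : ℝ) :
    Aq n R x r = Real.sqrt (1 - r^2) * (x - eta1 n R r) * (x - eta2 n R r) := by
  have h3 := aux_one_sub_sq_pos hn hR1 hR2 hr hr1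
  have h4 : 0 < Real.sqrt (1 - r^2) := Real.sqrt_pos.2 h3
  have hS : Real.sqrt (1 - r^2) ^ 2 = 1 - r^2 := Real.sq_sqrt (le_of_lt h3)
  have hB : 0 < Bq n R r := aux_Bq_pos hn hR1 hR2 hr
  have hsB : Real.sqrt (Bq n R r) ^ 2 = Bq n R r := Real.sq_sqrt (le_of_lt hB)
  rw [Bq] at hsB
  rw [Aq, eta1, eta2]
  field_simp
  linear_combination (norm := skip) (Real.sq_sqrt hB.le) + 4 * hS
  simp only [Bq]; ring


set_option maxHeartbeats 2000000 in
theorem stmt_7 (n k : ℕ) (hn : 2 ≤ n) (hk : 1 ≤ k) (R : ℝ) (hR1 : -1 < R) (hR2 : R < 1)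
    (r₀ : ℝ) (hr₀ : r₀ ∈ Set.Ioo (rootB n R) 1) (ψ : ℝ → ℝ)
    (hode : ∀ r ∈ Set.Ico r₀ (1 : ℝ), HasDerivAt ψ (Phi n k R r (ψ r)) r)
    (h1 : eta1 n R r₀ < ψ r₀) (h2 : ψ r₀ < eta2 n R r₀) :
    Filter.Tendsto ψ (nhdsWithin 1 (Set.Iio 1)) Filter.atTop ∧
      ¬ BddAbove (ψ '' Set.Ioo r₀ 1) := by
  obtain ⟨hbr₀, hr₀1⟩ := hr₀
  have hn1 : (1:ℝ) ≤ (n:ℝ) - 1 := aux_hn1 hn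
  have hk0 : (0:ℝ) < (k:ℝ) := by exact_mod_cast hk
  have hRb : R < rootB n R := aux_rootB_gt_R hn hR1 hR2
  have hr₀R : R < r₀ := lt_trans hRb hbr₀
  set f : ℝ → ℝ := fun r => Aq n R (ψ r) r with hfdef
  have hmem : ∀ r ∈ Set.Ico r₀ (1:ℝ), rootB n R < r ∧ r < 1 :=
    fun r hr => ⟨lt_of_lt_of_le hbr₀ hr.1, hr.2⟩
  have hposS : ∀ r ∈ Set.Ico r₀ (1:ℝ), 0 < 1 - r^2 := by
    intro r hr
    have h := hmem r hr
    have : R < r := lt_trans hRb h.1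
    nlinarith
  have hPhi : ∀ r : ℝ, Phi n k R r (ψ r)
      = (1 / ((k:ℝ) * (1 - r^2))) * ((ψ r)^2 + 1) * (-(f r)) := by
    intro r; simp only [hfdef, Phi, Aq]; ring
  have hPhi_pos : ∀ r ∈ Set.Ico r₀ (1:ℝ), f r < 0 → 0 < Phi n k R r (ψ r) := by
    intro r hr hf
    rw [hPhi r]
    have h2 : 0 < 1 - r^2 := hposS r hr
    have h3 : 0 < (k:ℝ) * (1 - r^2) := by positivity
    apply mul_pos (mul_pos (by positivity) (by positivity)) (by linarith)
  have hcψ : ∀ r ∈ Set.Ico r₀ (1:ℝ), ContinuousAt ψ r := fun r hr => (hode r hr).continuousAt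
  have hcf : ∀ r ∈ Set.Ico r₀ (1:ℝ), ContinuousAt f r := by
    intro r hr
    have hψ := hcψ r hr
    have c1 : ContinuousAt (fun r : ℝ => Real.sqrt (1 - r^2)) r :=
      (Real.continuous_sqrt.comp (by continuity)).continuousAt
    have c2 : ContinuousAt (fun r : ℝ => ((n:ℝ)-1) * (r - R)) r :=
      continuousAt_const.mul (continuousAt_id.sub continuousAt_const)
    simp only [hfdef, Aq]
    exact ((c1.mul (hψ.pow 2)).sub (c2.mul hψ)).add c1
  have hψr₀pos : 0 < ψ r₀ := lt_trans (aux_eta1_pos hn hR1 hR2 hbr₀ hr₀1) h1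
  have hfr₀ : f r₀ < 0 := by
    have hfac := aux_Aq_factor hn hR1 hR2 hbr₀ hr₀1 (ψ r₀)
    have h4 : 0 < Real.sqrt (1 - r₀^2) :=
      Real.sqrt_pos.2 (aux_one_sub_sq_pos hn hR1 hR2 hbr₀ hr₀1)
    show Aq n R (ψ r₀) r₀ < 0
    rw [hfac]
    exact mul_neg_of_pos_of_neg (mul_pos h4 (by linarith)) (by linarith)
  -- invariance: f stays negative
  have hfneg : ∀ r ∈ Set.Ico r₀ (1:ℝ), f r < 0 := by
    by_contra hcon
    push_neg at hcon
    obtain ⟨t₀, ht₀, ht₀f⟩ := hcon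
    set T := {t | t ∈ Set.Ico r₀ (1:ℝ) ∧ 0 ≤ f t} with hTdef
    have hTne : T.Nonempty := ⟨t₀, ht₀, ht₀f⟩
    have hTbd : BddBelow T := ⟨r₀, fun t ht => ht.1.1⟩
    set c := sInf T with hcdef
    have hc_le : c ≤ t₀ := csInf_le hTbd ⟨ht₀, ht₀f⟩
    have hc_ge : r₀ ≤ c := le_csInf hTne (fun t ht => ht.1.1)
    have hc1 : c < 1 := lt_of_le_of_lt hc_le ht₀.2
    have hcIco : c ∈ Set.Ico r₀ (1:ℝ) := ⟨hc_ge, hc1⟩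
    have hfc_ge : 0 ≤ f c := by
      by_contra hneg
      push_neg at hneg
      have hev : ∀ᶠ s in nhds c, f s < 0 :=
        (hcf c hcIco).eventually_lt continuousAt_const hneg
      obtain ⟨ε, hε, hball⟩ := Metric.eventually_nhds_iff.1 hev
      have hlb2 : c + ε ≤ c := by
        rw [hcdef]
        apply le_csInf hTne
        intro t ht
        have htc : c ≤ t := csInf_le hTbd ht
        by_contra hlt
        push_neg at hlt
        have : dist t c < ε := by
          rw [Real.dist_eq, abs_lt]; constructor <;> linarith
        exact absurd ht.2 (not_le.2 (hball this))
      linarith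
    have hc_gt : r₀ < c := by
      rcases eq_or_lt_of_le hc_ge with h | h
      · exfalso; rw [← h] at hfc_ge; linarith
      · exact h
    have hfneg' : ∀ s, r₀ ≤ s → s < c → f s < 0 := by
      intro s hs1 hs2
      by_contra hge
      push_neg at hge
      have : c ≤ s := csInf_le hTbd ⟨⟨hs1, lt_trans hs2 hc1⟩, hge⟩
      linarith
    have hfc_le : f c ≤ 0 := by
      have htend : Filter.Tendsto f (nhdsWithin c (Set.Iio c)) (nhds (f c)) :=
        ((hcf c hcIco).continuousWithinAt).tendsto
      apply le_of_tendsto htend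
      filter_upwards [Ioo_mem_nhdsLT_of_mem (⟨hc_gt, le_refl c⟩ : c ∈ Set.Ioc r₀ c)] with s hs
      exact le_of_lt (hfneg' s (le_of_lt hs.1) hs.2)
    have hfc : f c = 0 := le_antisymm hfc_le hfc_ge
    -- ψ c ≥ ψ r₀ > 0
    have hψmono : MonotoneOn ψ (Set.Icc r₀ c) := by
      apply monotoneOn_of_deriv_nonneg (convex_Icc _ _)
      · intro s hs
        exact (hcψ s ⟨hs.1, lt_of_le_of_lt hs.2 hc1⟩).continuousWithinAt
      · rw [interior_Icc]
        intro s hs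
        exact ((hode s ⟨le_of_lt hs.1, lt_trans hs.2 hc1⟩).differentiableAt).differentiableWithinAt
      · rw [interior_Icc]
        intro s hs
        rw [(hode s ⟨le_of_lt hs.1, lt_trans hs.2 hc1⟩).deriv]
        exact le_of_lt (hPhi_pos s ⟨le_of_lt hs.1, lt_trans hs.2 hc1⟩
          (hfneg' s (le_of_lt hs.1) hs.2))
    have hψc : 0 < ψ c :=
      lt_of_lt_of_le hψr₀pos (hψmono ⟨le_refl r₀, le_of_lt hc_gt⟩
        ⟨le_of_lt hc_gt, le_refl c⟩ (le_of_lt hc_gt))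
    have hS : 0 < 1 - c^2 := hposS c hcIco
    have hSs : 0 < Real.sqrt (1 - c^2) := Real.sqrt_pos.2 hS
    have hSsq : Real.sqrt (1 - c^2)^2 = 1 - c^2 := Real.sq_sqrt hS.le
    have hd0 : Phi n k R c (ψ c) = 0 := by rw [hPhi c, hfc]; ring
    have hψd : HasDerivAt ψ 0 c := hd0 ▸ hode c hcIco
    have hfd : HasDerivAt f
        (-c / Real.sqrt (1 - c^2) * ((ψ c)^2 + 1) - ((n:ℝ)-1) * ψ c) c := by
      have h1d : HasDerivAt (fun r : ℝ => 1 - r^2) (-(2*c)) c := by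
        simpa using ((hasDerivAt_pow 2 c).const_sub 1)
      have hsq : HasDerivAt (fun r : ℝ => Real.sqrt (1 - r^2))
          (-(2*c) / (2 * Real.sqrt (1 - c^2))) c := h1d.sqrt (by linarith)
      have hcomb := ((hsq.mul (hψd.pow 2)).sub
        ((((hasDerivAt_id c).sub_const R).const_mul ((n:ℝ)-1)).mul hψd)).add hsq
      convert hcomb using 1
      · rfl
      · rfl
      · rfl
      simp only [id_eq, Pi.pow_apply]
      push_cast
      field_simp
      ring
    have heq : Real.sqrt (1 - c^2) * ((ψ c)^2 + 1) = ((n:ℝ)-1) * (c - R) * ψ c := by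
      have h0 : Aq n R (ψ c) c = 0 := hfc
      rw [Aq] at h0
      linarith
    have hcR : c * R < 1 := by nlinarith [sq_nonneg (c - R)]
    have hdneg : -c / Real.sqrt (1 - c^2) * ((ψ c)^2 + 1) - ((n:ℝ)-1) * ψ c < 0 := by
      set d := -c / Real.sqrt (1 - c^2) * ((ψ c)^2 + 1) - ((n:ℝ)-1) * ψ c with hddef
      have hdm : -c / Real.sqrt (1 - c^2) * Real.sqrt (1 - c^2) = -c :=
        div_mul_cancel₀ _ (ne_of_gt hSs)
      have hdS : d * Real.sqrt (1 - c^2)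
          = -c * ((ψ c)^2 + 1) - ((n:ℝ)-1) * ψ c * Real.sqrt (1 - c^2) := by
        rw [hddef]
        linear_combination ((ψ c)^2 + 1) * hdm
      have hXS : d * (1 - c^2) = ((n:ℝ)-1) * ψ c * (c * R - 1) := by
        linear_combination Real.sqrt (1 - c^2) * hdS + (-c) * heq
          + (-(d + ((n:ℝ)-1) * ψ c)) * hSsq
      by_contra hge
      push_neg at hge
      nlinarith [mul_nonneg hge hS.le, mul_pos (mul_pos (show (0:ℝ) < (n:ℝ)-1 by linarith) hψc) (show (0:ℝ) < 1 - c*R by linarith)]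
    -- slope contradiction
    have hslope := hasDerivAt_iff_tendsto_slope.1 hfd
    have hmono_left : nhdsWithin c (Set.Iio c) ≤ nhdsWithin c {c}ᶜ :=
      nhdsWithin_mono c (fun x hx => ne_of_lt hx)
    have hev2 : ∀ᶠ s in nhdsWithin c (Set.Iio c), slope f c s < 0 :=
      (hslope.mono_left hmono_left).eventually_lt_const hdneg
    have hev3 := hev2.and
      (Filter.eventually_mem_set.2 (Ioo_mem_nhdsLT_of_mem (⟨hc_gt, le_refl c⟩ : c ∈ Set.Ioc r₀ c)))
    obtain ⟨s, hs1, hs2⟩ := hev3.exists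
    have hfs : f s < 0 := hfneg' s (le_of_lt hs2.1) hs2.2
    rw [slope_def_field] at hs1
    rw [hfc] at hs1
    have hsc : s - c < 0 := by linarith [hs2.2]
    rw [div_neg_iff] at hs1
    rcases hs1 with ⟨hp, hq⟩ | ⟨hp, hq⟩
    · linarith
    · linarith
  -- strict monotonicity of ψ on [r₀, 1)
  have hmono : StrictMonoOn ψ (Set.Ico r₀ (1:ℝ)) := by
    apply strictMonoOn_of_deriv_pos (convex_Ico _ _)
    · intro s hs; exact (hcψ s hs).continuousWithinAt
    · rw [interior_Ico]
      intro s hs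
      rw [(hode s (Set.Ioo_subset_Ico_self hs)).deriv]
      exact hPhi_pos s (Set.Ioo_subset_Ico_self hs) (hfneg s (Set.Ioo_subset_Ico_self hs))
  have hlb : ∀ r ∈ Set.Ico r₀ (1:ℝ), ψ r₀ ≤ ψ r := by
    intro r hr
    rcases eq_or_lt_of_le hr.1 with h | h
    · rw [← h]
    · exact le_of_lt (hmono ⟨le_refl r₀, hr₀1⟩ hr h)
  -- unboundedness
  have hnb : ¬ BddAbove (ψ '' Set.Ioo r₀ 1) := by
    intro hb
    obtain ⟨M0, hM0⟩ := hb
    set M := max M0 (ψ r₀) with hMdef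
    have hub : ∀ r ∈ Set.Ico r₀ (1:ℝ), ψ r ≤ M := by
      intro r hr
      rcases eq_or_lt_of_le hr.1 with h | h
      · rw [← h]; exact le_max_right _ _
      · exact le_trans (hM0 ⟨r, ⟨h, hr.2⟩, rfl⟩) (le_max_left _ _)
    have hMpos : 0 < M := lt_of_lt_of_le hψr₀pos (le_max_right _ _)
    set a := ψ r₀ with hadef
    set c₁ := ((n:ℝ)-1) * (r₀ - R) * a with hc₁def
    have hc₁ : 0 < c₁ := by
      apply mul_pos (mul_pos (by linarith) (by linarith)) hψr₀pos
    set ε := c₁ / (2 * (M^2 + 1)) with hεdef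
    have hε : 0 < ε := by positivity
    set r₁ := max r₀ (max 0 (1 - ε^2/2)) with hr₁def
    have hr₁r₀ : r₀ ≤ r₁ := le_max_left _ _
    have hr₁0 : 0 ≤ r₁ := le_trans (le_max_left _ _) (le_max_right _ _)
    have hr₁1 : r₁ < 1 := by
      apply max_lt hr₀1
      apply max_lt (by norm_num)
      nlinarith
    have hr₁e : 1 - ε^2/2 ≤ r₁ := le_trans (le_max_right _ _) (le_max_right _ _)
    have hsmall : ∀ r ∈ Set.Ico r₁ (1:ℝ),
        Real.sqrt (1 - r^2) * ((ψ r)^2 + 1) ≤ c₁ / 2 := by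
      intro r hr
      have hr0 : 0 ≤ r := le_trans hr₁0 hr.1
      have h1r : 1 - r^2 ≤ ε^2 := by nlinarith [hr.1, hr.2, hr₁e]
      have hsq : Real.sqrt (1 - r^2) ≤ ε := by
        calc Real.sqrt (1 - r^2) ≤ Real.sqrt (ε^2) := Real.sqrt_le_sqrt h1r
          _ = ε := Real.sqrt_sq hε.le
      have hrIco : r ∈ Set.Ico r₀ (1:ℝ) := ⟨le_trans hr₁r₀ hr.1, hr.2⟩
      have hψub : ψ r ≤ M := hub r hrIco
      have hψlb : 0 < ψ r := lt_of_lt_of_le hψr₀pos (hlb r hrIco)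
      have hψsq : (ψ r)^2 + 1 ≤ M^2 + 1 := by nlinarith
      have hsn : 0 ≤ Real.sqrt (1 - r^2) := Real.sqrt_nonneg _
      calc Real.sqrt (1 - r^2) * ((ψ r)^2 + 1) ≤ ε * (M^2 + 1) :=
            mul_le_mul hsq hψsq (by positivity) hε.le
        _ = c₁ / 2 := by rw [hεdef]; field_simp
    set cc := c₁ / (4*(k:ℝ)) with hccdef
    have hcc : 0 < cc := by positivity
    set g := fun r => ψ r + cc * Real.log (1 - r) with hgdef
    have hgd : ∀ r ∈ Set.Ico r₁ (1:ℝ),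
        HasDerivAt g (Phi n k R r (ψ r) + cc * (-1 / (1 - r))) r := by
      intro r hr
      have h1 : HasDerivAt (fun r : ℝ => 1 - r) (-1) r := by
        simpa using ((hasDerivAt_id r).const_sub 1)
      have hl : HasDerivAt (fun r : ℝ => Real.log (1 - r)) (-1 / (1 - r)) r :=
        h1.log (by intro h; have := hr.2; nlinarith [hr.2, h])
      exact (hode r ⟨le_trans hr₁r₀ hr.1, hr.2⟩).add (hl.const_mul cc)
    have hgd_nonneg : ∀ r ∈ Set.Ioo r₁ (1:ℝ),
        0 ≤ Phi n k R r (ψ r) + cc * (-1 / (1 - r)) := by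
      intro r hr
      have hrIco : r ∈ Set.Ico r₀ (1:ℝ) := ⟨le_trans hr₁r₀ hr.1.le, hr.2⟩
      have hfr := hfneg r hrIco
      have h1r2 : 0 < 1 - r^2 := hposS r hrIco
      have h1r : 0 < 1 - r := by linarith [hr.2]
      have hψlb2 : a ≤ ψ r := hlb r hrIco
      have hψpos : 0 < ψ r := lt_of_lt_of_le hψr₀pos hψlb2
      have hAf : c₁ / 2 ≤ -(f r) := by
        have hsm := hsmall r ⟨hr.1.le, hr.2⟩
        have hlin : c₁ ≤ ((n:ℝ)-1) * (r - R) * ψ r := by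
          rw [hc₁def]
          have h3 : ((n:ℝ)-1)*(r₀-R) ≤ ((n:ℝ)-1)*(r-R) := by nlinarith [hrIco.1]
          have h4 : (0:ℝ) ≤ ((n:ℝ)-1)*(r-R) := by nlinarith [hrIco.1, hr₀R]
          exact mul_le_mul h3 hψlb2 hψr₀pos.le h4
        have : f r = Real.sqrt (1 - r^2) * ((ψ r)^2 + 1) - ((n:ℝ)-1) * (r - R) * ψ r := by
          simp only [hfdef, Aq]; ring
        linarith [this]
      have e1 : (1:ℝ) ≤ (ψ r)^2 + 1 := by nlinarith
      have hfr_nonneg : 0 ≤ -(f r) := by linarith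
      have hprod : c₁ / 2 ≤ ((ψ r)^2 + 1) * (-(f r)) := by
        calc c₁ / 2 ≤ -(f r) := hAf
          _ = 1 * (-(f r)) := by ring
          _ ≤ ((ψ r)^2 + 1) * (-(f r)) := mul_le_mul_of_nonneg_right e1 hfr_nonneg
      have h2r : 1 - r^2 ≤ 2*(1 - r) := by nlinarith [hr.1, hr₁0]
      have hkpos : 0 < (k:ℝ) * (1 - r^2) := by positivity
      have key : cc * ((k:ℝ) * (1 - r^2)) ≤ (((ψ r)^2 + 1) * (-(f r))) * (1 - r) := by
        have s1 : cc * ((k:ℝ) * (1 - r^2)) = c₁ * (1 - r^2) / 4 := by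
          rw [hccdef]; field_simp
        have s2 : c₁ * (1 - r^2) / 4 ≤ c₁ * (2*(1-r)) / 4 := by nlinarith
        have s3 : c₁ * (2*(1-r)) / 4 = (c₁/2) * (1 - r) := by ring
        have s4 : (c₁/2) * (1-r) ≤ (((ψ r)^2 + 1) * (-(f r))) * (1 - r) :=
          mul_le_mul_of_nonneg_right hprod h1r.le
        linarith
      have hrw : Phi n k R r (ψ r) + cc * (-1/(1-r))
          = (((ψ r)^2 + 1) * (-(f r))) / ((k:ℝ) * (1 - r^2)) - cc / (1 - r) := by
        rw [hPhi r]; field_simp; ring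
      rw [hrw, sub_nonneg, div_le_div_iff₀ h1r hkpos]
      linarith
    have hgmono : MonotoneOn g (Set.Ico r₁ (1:ℝ)) := by
      apply monotoneOn_of_deriv_nonneg (convex_Ico _ _)
      · intro s hs; exact (hgd s hs).continuousAt.continuousWithinAt
      · rw [interior_Ico]
        intro s hs
        exact (hgd s (Set.Ioo_subset_Ico_self hs)).differentiableAt.differentiableWithinAt
      · rw [interior_Ico]
        intro s hs
        rw [(hgd s (Set.Ioo_subset_Ico_self hs)).deriv]
        exact hgd_nonneg s hs
    set K := (M - ψ r₁ - cc * Real.log (1 - r₁)) / cc + 1 with hKdef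
    set t := min ((1 - r₁)/2) (Real.exp (-K)) with htdef
    have ht0 : 0 < t := lt_min (by linarith) (Real.exp_pos _)
    set r₂ := 1 - t with hr₂def
    have hr₂1 : r₂ < 1 := by rw [hr₂def]; linarith
    have htle : t ≤ (1 - r₁)/2 := min_le_left _ _
    have hr₂ge : r₁ ≤ r₂ := by rw [hr₂def]; linarith
    have hg := hgmono ⟨le_refl r₁, hr₁1⟩ ⟨hr₂ge, hr₂1⟩ hr₂ge
    have hlogt : Real.log t ≤ -K := by
      calc Real.log t ≤ Real.log (Real.exp (-K)) :=
            Real.log_le_log ht0 (min_le_right _ _)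
        _ = -K := Real.log_exp _
    have hψr₂ : ψ r₂ ≤ M := hub r₂ ⟨le_trans hr₁r₀ hr₂ge, hr₂1⟩
    have h1r₂ : (1:ℝ) - r₂ = t := by rw [hr₂def]; ring
    have hccK : cc * K = M - ψ r₁ - cc * Real.log (1 - r₁) + cc := by
      rw [hKdef]; field_simp
    simp only [hgdef] at hg
    rw [h1r₂] at hg
    nlinarith [mul_le_mul_of_nonneg_left hlogt hcc.le]
  refine ⟨?_, hnb⟩
  rw [Filter.tendsto_atTop]
  intro b
  have hex : ∃ x ∈ Set.Ioo r₀ (1:ℝ), b < ψ x := by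
    by_contra hcon
    push_neg at hcon
    exact hnb ⟨b, by rintro y ⟨x, hx, rfl⟩; exact hcon x hx⟩
  obtain ⟨x, hx, hbx⟩ := hex
  filter_upwards [Ioo_mem_nhdsLT_of_mem (⟨hx.2, le_refl (1:ℝ)⟩ : (1:ℝ) ∈ Set.Ioc x 1)] with s hs
  exact le_of_lt (lt_of_lt_of_le hbx (le_of_lt
    (hmono ⟨hx.1.le, hx.2⟩ ⟨le_trans hx.1.le hs.1.le, hs.2⟩ hs.1)))
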